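/- Let Λ be the Enriques lattice and E₁,…,E₁₀ an isotropic 10-sequence in Λ. For any integers φ₁,…,φ₁₀ with 0 < φ₁ ≤ φ₂ ≤ ⋯ ≤ φ₁₀, with φ₁+⋯+φ₁₀ divisible by 3, and with φ₁+⋯+φ₇ ≥ 2(φ₈+φ₉+φ₁₀), there exists L ∈ Λ with ⟨L,L⟩ > 0 and ⟨Eᵢ,L⟩ = φᵢ for all i ∈ {1,…,10}. (This is the lattice core of the converse part of Theorem 1.4: every 10-tuple satisfying conditions (a)–(c) is realized as the vector of intersection numbers of some class of positive square with an isotropic 10-sequence.) -/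

import Mathlib

/-- Gram matrix of the Enriques lattice `U ⊕ E₈(-1)`: the orthogonal direct sum of the
hyperbolic plane and the negative of the E₈ Cartan matrix. -/
def enriquesGram : Matrix (Fin 10) (Fin 10) ℤ :=
  !![0, 1, 0, 0, 0, 0, 0, 0, 0, 0;
     1, 0, 0, 0, 0, 0, 0, 0, 0, 0;
     0, 0, -2, 0, 1, 0, 0, 0, 0, 0;
     0, 0, 0, -2, 0, 1, 0, 0, 0, 0;
     0, 0, 1, 0, -2, 1, 0, 0, 0, 0;
     0, 0, 0, 1, 1, -2, 1, 0, 0, 0;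
     0, 0, 0, 0, 0, 1, -2, 1, 0, 0;
     0, 0, 0, 0, 0, 0, 1, -2, 1, 0;
     0, 0, 0, 0, 0, 0, 0, 1, -2, 1;
     0, 0, 0, 0, 0, 0, 0, 0, 1, -2]

/-- The symmetric bilinear pairing of the Enriques lattice `Λ = ℤ¹⁰`. -/
def epair (x y : Fin 10 → ℤ) : ℤ := ∑ i, ∑ j, x i * enriquesGram i j * y j

/-- An isotropic 10-sequence in the Enriques lattice: `⟨Eᵢ,Eᵢ⟩ = 0` and `⟨Eᵢ,Eⱼ⟩ = 1`
for `i ≠ j`. -/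
def IsIsotropicTenSeq (E : Fin 10 → Fin 10 → ℤ) : Prop :=
  (∀ i, epair (E i) (E i) = 0) ∧ ∀ i j, i ≠ j → epair (E i) (E j) = 1

/-- An explicit integral inverse of the Gram matrix (the lattice is unimodular). -/
def eGinv : Matrix (Fin 10) (Fin 10) ℤ :=
  !![0, 1, 0, 0, 0, 0, 0, 0, 0, 0;
     1, 0, 0, 0, 0, 0, 0, 0, 0, 0;
     0, 0, -4, -5, -7, -10, -8, -6, -4, -2;
     0, 0, -5, -8, -10, -15, -12, -9, -6, -3;
     0, 0, -7, -10, -14, -20, -16, -12, -8, -4;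
     0, 0, -10, -15, -20, -30, -24, -18, -12, -6;
     0, 0, -8, -12, -16, -24, -20, -15, -10, -5;
     0, 0, -6, -9, -12, -18, -15, -12, -8, -4;
     0, 0, -4, -6, -8, -12, -10, -8, -6, -3;
     0, 0, -2, -3, -4, -6, -5, -4, -3, -2]

lemma eG_mul_eGinv : enriquesGram * eGinv = 1 := by decide

lemma eG_symm : ∀ i j, enriquesGram j i = enriquesGram i j := by
  intro i j; fin_cases i <;> fin_cases j <;> rfl

lemma epair_comm (x y : Fin 10 → ℤ) : epair x y = epair y x := by
  rw [epair, epair, Finset.sum_comm]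
  exact Finset.sum_congr rfl fun i _ => Finset.sum_congr rfl fun j _ => by
    rw [eG_symm i j]; ring

lemma epair_smul_right (c : ℤ) (x y : Fin 10 → ℤ) : epair x (c • y) = c * epair x y := by
  simp only [epair, Pi.smul_apply, smul_eq_mul, Finset.mul_sum]
  exact Finset.sum_congr rfl fun i _ => Finset.sum_congr rfl fun j _ => by ring

lemma epair_add_right (x y z : Fin 10 → ℤ) : epair x (y + z) = epair x y + epair x z := by
  simp only [epair, Pi.add_apply, mul_add, Finset.sum_add_distrib]

lemma epair_sub_right (x y z : Fin 10 → ℤ) : epair x (y - z) = epair x y - epair x z := by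
  simp only [epair, Pi.sub_apply, mul_sub, Finset.sum_sub_distrib]

lemma epair_zero_right (x : Fin 10 → ℤ) : epair x 0 = 0 := by
  simp [epair]

lemma epair_sum_right {ι : Type*} (s : Finset ι) (x : Fin 10 → ℤ) (f : ι → Fin 10 → ℤ) :
    epair x (∑ j ∈ s, f j) = ∑ j ∈ s, epair x (f j) := by
  induction s using Finset.cons_induction with
  | empty => simp [epair_zero_right]
  | cons a s ha ih => rw [Finset.sum_cons, Finset.sum_cons, epair_add_right, ih]

/-- mod 3 argument: the sum of an isotropic 10-sequence is divisible by 3. -/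
lemma sumE_dvd (E : Fin 10 → Fin 10 → ℤ) (hE : IsIsotropicTenSeq E) (k : Fin 10) :
    (3:ℤ) ∣ ∑ i, E i k := by
  classical
  set B : Matrix (Fin 10) (Fin 10) ℤ := Matrix.of E with hB
  have hBGB : B * enriquesGram * B.transpose
      = Matrix.of (fun i j => if i = j then (0:ℤ) else 1) := by
    ext i j
    have h1 : (B * enriquesGram * B.transpose) i j = epair (E i) (E j) := by
      simp only [Matrix.mul_apply, Matrix.transpose_apply, Finset.sum_mul, epair, hB,
        Matrix.of_apply]
      rw [Finset.sum_comm]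
    rw [h1, Matrix.of_apply]
    rcases eq_or_ne i j with h | h
    · simp [h, hE.1 j]
    · simp [h, hE.2 i j h]
  let f := Int.castRingHom (ZMod 3)
  set B₃ := B.map f with hB3
  set G₃ := enriquesGram.map f with hG3
  have hmap : B₃ * G₃ * B₃.transpose
      = Matrix.of (fun i j => if i = j then (0 : ZMod 3) else 1) := by
    rw [hB3, hG3, ← Matrix.map_mul, ← Matrix.transpose_map, ← Matrix.map_mul, hBGB]
    ext i j
    simp [Matrix.map_apply, apply_ite f]
  have hGunit : IsUnit G₃ := by
    have h : G₃ * eGinv.map f = 1 := by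
      rw [hG3, ← Matrix.map_mul, eG_mul_eGinv]
      exact Matrix.map_one _ (map_zero f) (map_one f)
    exact (Matrix.isUnit_iff_isUnit_det _).2 (Matrix.isUnit_det_of_right_inverse h)
  have hones : (Matrix.of (fun i j : Fin 10 => if i = j then (0 : ZMod 3) else 1)).mulVec
      (fun _ => 1) = 0 := by decide
  have hdet : B₃.det = 0 := by
    by_contra hd
    have hBu : IsUnit B₃ := (Matrix.isUnit_iff_isUnit_det _).2 (isUnit_iff_ne_zero.2 hd)
    have hAu : IsUnit (B₃ * G₃ * B₃.transpose) :=
      (hBu.mul hGunit).mul ((Matrix.isUnit_iff_isUnit_det _).2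
        (by rw [Matrix.det_transpose]; exact (Matrix.isUnit_iff_isUnit_det _).1 hBu))
    obtain ⟨N, hN⟩ := hAu.exists_left_inv
    have : (fun _ => (1:ZMod 3)) = (0 : Fin 10 → ZMod 3) := by
      calc (fun _ => (1:ZMod 3))
          = (1 : Matrix (Fin 10) (Fin 10) (ZMod 3)).mulVec (fun _ => 1) := by
            rw [Matrix.one_mulVec]
        _ = N.mulVec ((B₃ * G₃ * B₃.transpose).mulVec (fun _ => 1)) := by
            rw [Matrix.mulVec_mulVec, hN]
        _ = 0 := by rw [hmap, hones, Matrix.mulVec_zero]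
    exact one_ne_zero (congrFun this 0)
  have hdetT : B₃.transpose.det = 0 := by rw [Matrix.det_transpose]; exact hdet
  obtain ⟨v, hv0, hv⟩ := Matrix.exists_mulVec_eq_zero_iff.2 hdetT
  have hAv : (Matrix.of (fun i j => if i = j then (0 : ZMod 3) else 1)).mulVec v = 0 := by
    rw [← hmap, ← Matrix.mulVec_mulVec, ← Matrix.mulVec_mulVec, hv, Matrix.mulVec_zero,
      Matrix.mulVec_zero]
  have hconst : ∀ j, v j = ∑ i, v i := by
    intro j
    have := congrFun hAv j
    simp only [Matrix.mulVec, Matrix.of_apply, Pi.zero_apply, dotProduct] at this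
    have h2 : ∑ i, (if j = i then (0:ZMod 3) else 1) * v i = (∑ i, v i) - v j := by
      rw [Finset.sum_congr rfl (fun i _ => show (if j = i then (0:ZMod 3) else 1) * v i
          = v i - (if j = i then v i else 0) by split_ifs <;> ring)]
      rw [Finset.sum_sub_distrib, Finset.sum_ite_eq]
      simp
    rw [h2] at this
    linear_combination -this
  obtain ⟨j0, hj0⟩ : ∃ j, v j ≠ 0 := by
    by_contra h; push_neg at h; exact hv0 (funext h)
  have hS : (∑ i, v i) ≠ 0 := by rw [← hconst j0]; exact hj0
  have hcol : ∀ m, ∑ i, (E i m : ZMod 3) = 0 := by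
    intro m
    have := congrFun hv m
    simp only [Matrix.mulVec, Matrix.transpose_apply, dotProduct, Pi.zero_apply,
      hB3, hB, Matrix.map_apply, Matrix.of_apply] at this
    have h3 : ∑ i, f (E i m) * v i = (∑ i, (E i m : ZMod 3)) * (∑ i, v i) := by
      rw [Finset.sum_mul]
      exact Finset.sum_congr rfl fun i _ => by rw [hconst i]; rfl
    rw [h3] at this
    exact (mul_eq_zero.1 this).resolve_right hS
  have := hcol k
  rw [← Int.cast_sum] at this
  exact (ZMod.intCast_zmod_eq_zero_iff_dvd _ 3).1 this

set_option maxHeartbeats 1000000 in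
/-- The key numerical inequality. -/
lemma key_ineq (a b c d e f g p q r : ℤ) (h0 : 0 < a)
    (h1 : a ≤ b) (h2 : b ≤ c) (h3 : c ≤ d) (h4 : d ≤ e) (h5 : e ≤ f) (h6 : f ≤ g)
    (h7 : g ≤ p) (h8 : p ≤ q) (h9 : q ≤ r)
    (hin : a+b+c+d+e+f+g ≥ 2*(p+q+r)) :
    9*(a^2+b^2+c^2+d^2+e^2+f^2+g^2+p^2+q^2+r^2) < (a+b+c+d+e+f+g+p+q+r)^2 := by
  have key : (a+b+c+d+e+f+g+p+q+r)^2 - 9*(a^2+b^2+c^2+d^2+e^2+f^2+g^2+p^2+q^2+r^2)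
      = 9*(a*(p-a)+b*(p-b)+c*(p-c)+d*(p-d)+e*(p-e)+f*(p-f)+g*(p-g))
        + 18*p*(2*(q-p)+(r-q)) + 18*(q-p)*((q-p)+(r-q))
        + 3*(a+b+c+d+e+f+g - 2*(p+q+r))*(3*p+4*(q-p)+2*(r-q))
        + (a+b+c+d+e+f+g - 2*(p+q+r))^2 := by ring
  linarith [key,
    mul_nonneg (by omega : (0:ℤ) ≤ a-1) (by omega : (0:ℤ) ≤ p-a),
    mul_nonneg (by omega : (0:ℤ) ≤ b-1) (by omega : (0:ℤ) ≤ p-b),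
    mul_nonneg (by omega : (0:ℤ) ≤ c-1) (by omega : (0:ℤ) ≤ p-c),
    mul_nonneg (by omega : (0:ℤ) ≤ d-1) (by omega : (0:ℤ) ≤ p-d),
    mul_nonneg (by omega : (0:ℤ) ≤ e-1) (by omega : (0:ℤ) ≤ p-e),
    mul_nonneg (by omega : (0:ℤ) ≤ f-1) (by omega : (0:ℤ) ≤ p-f),
    mul_nonneg (by omega : (0:ℤ) ≤ g-1) (by omega : (0:ℤ) ≤ p-g),
    mul_nonneg (by omega : (0:ℤ) ≤ 18*p-2) (by omega : (0:ℤ) ≤ 2*(q-p)+(r-q)),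
    mul_nonneg (by omega : (0:ℤ) ≤ q-p) (by omega : (0:ℤ) ≤ (q-p)+(r-q)),
    mul_nonneg (by omega : (0:ℤ) ≤ 3*(a+b+c+d+e+f+g - 2*(p+q+r)))
      (by omega : (0:ℤ) ≤ 3*p+4*(q-p)+2*(r-q)-1),
    sq_nonneg (a+b+c+d+e+f+g - 2*(p+q+r))]

/-- Any 10-tuple of integers `0 < φ₁ ≤ ⋯ ≤ φ₁₀` whose sum is divisible by 3 and with
`φ₁+⋯+φ₇ ≥ 2(φ₈+φ₉+φ₁₀)` is realized as the vector of intersection numbers of some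
class `L` of positive square with a given isotropic 10-sequence. -/
theorem exists_class_with_prescribed_phi_vector
    (E : Fin 10 → Fin 10 → ℤ) (hE : IsIsotropicTenSeq E)
    (φ : Fin 10 → ℤ) (hpos : 0 < φ 0) (hmono : Monotone φ)
    (hdvd : (3 : ℤ) ∣ ∑ i, φ i)
    (hineq : φ 0 + φ 1 + φ 2 + φ 3 + φ 4 + φ 5 + φ 6 ≥ 2 * (φ 7 + φ 8 + φ 9)) :
    ∃ L : Fin 10 → ℤ, 0 < epair L L ∧ ∀ i, epair (E i) L = φ i := by
  obtain ⟨hE0, hE1⟩ := hE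
  -- the half-fiber class D with 3D = E₁ + ⋯ + E₁₀
  obtain ⟨D, hD⟩ : ∃ D : Fin 10 → ℤ, ∀ k, ∑ i, E i k = 3 * D k :=
    ⟨fun k => (∑ i, E i k) / 3,
      fun k => (Int.mul_ediv_cancel' (sumE_dvd E ⟨hE0, hE1⟩ k)).symm⟩
  have hD3 : (3:ℤ) • D = ∑ i, E i := by
    funext k
    simp only [Pi.smul_apply, smul_eq_mul, Finset.sum_apply]
    exact (hD k).symm
  have hpairEE : ∀ i j, epair (E i) (E j) = if j = i then 0 else 1 := by
    intro i j
    rcases eq_or_ne j i with h | h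
    · simp [h, hE0 i]
    · simp [h, hE1 i j (Ne.symm h)]
  have hsum9 : ∀ i, ∑ j, epair (E i) (E j) = 9 := by
    intro i
    rw [Finset.sum_congr rfl fun j _ => hpairEE i j]
    simp [Finset.sum_ite_eq, Finset.sum_ite, Finset.filter_eq', Finset.filter_ne']
  have hED : ∀ i, epair (E i) D = 3 := by
    intro i
    have h : 3 * epair (E i) D = 9 := by
      rw [← epair_smul_right, hD3, epair_sum_right, hsum9 i]
    omega
  have hDE : ∀ j, epair D (E j) = 3 := fun j => by rw [epair_comm]; exact hED j
  have hDD : epair D D = 10 := by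
    have h1 : epair ((3:ℤ) • D) ((3:ℤ) • D) = 9 * epair D D := by
      rw [epair_smul_right, epair_comm, epair_smul_right, epair_comm]
      ring
    have h2 : epair ((3:ℤ) • D) ((3:ℤ) • D) = 90 := by
      rw [hD3, epair_sum_right]
      rw [Finset.sum_congr rfl fun j _ => by
        rw [epair_comm, epair_sum_right, hsum9 j]]
      simp
    omega
  -- the class L
  obtain ⟨c, hc⟩ := hdvd
  set T : Fin 10 → ℤ := ∑ j, φ j • E j with hTdef
  set L : Fin 10 → ℤ := c • D - T with hLdef
  have hET : ∀ i, epair (E i) T = (∑ j, φ j) - φ i := by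
    intro i
    rw [hTdef, epair_sum_right,
      Finset.sum_congr rfl fun j _ => by rw [epair_smul_right, hpairEE i j]]
    rw [Finset.sum_congr rfl fun j _ => show φ j * (if j = i then (0:ℤ) else 1)
        = φ j - (if j = i then φ j else 0) by split_ifs <;> ring]
    rw [Finset.sum_sub_distrib, Finset.sum_ite_eq']
    simp
  have hEL : ∀ i, epair (E i) L = φ i := by
    intro i
    rw [hLdef, epair_sub_right, epair_smul_right, hED i, hET i]
    linarith [hc]
  have hDT : epair D T = 3 * ∑ j, φ j := by
    rw [hTdef, epair_sum_right,
      Finset.sum_congr rfl fun j _ => by rw [epair_smul_right, hDE j]]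
    rw [← Finset.sum_mul]
    ring
  have hTT : epair T T = (∑ j, φ j) * (∑ j, φ j) - ∑ j, φ j * φ j := by
    have h1 : epair T T = ∑ j, φ j * ((∑ i, φ i) - φ j) := by
      conv_lhs => rw [hTdef, epair_sum_right]
      exact Finset.sum_congr rfl fun j _ => by
        rw [epair_smul_right, epair_comm, hET j]
    rw [h1, Finset.sum_congr rfl fun j _ => show φ j * ((∑ i, φ i) - φ j)
        = φ j * (∑ i, φ i) - φ j * φ j by ring]
    rw [Finset.sum_sub_distrib, ← Finset.sum_mul]
  have hLL : epair L L = c * c - ∑ j, φ j * φ j := by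
    have hLD : epair L D = c * 10 - 3 * ∑ j, φ j := by
      rw [epair_comm, hLdef, epair_sub_right, epair_smul_right, hDD, hDT]
    have hLT : epair L T = c * (3 * ∑ j, φ j) - epair T T := by
      rw [epair_comm, hLdef, epair_sub_right, epair_smul_right, epair_comm T D, hDT]
    nth_rewrite 2 [hLdef]
    rw [epair_sub_right, epair_smul_right, hLD, hLT, hTT, hc]
    ring
  refine ⟨L, ?_, hEL⟩
  rw [hLL]
  have hkey := key_ineq (φ 0) (φ 1) (φ 2) (φ 3) (φ 4) (φ 5) (φ 6) (φ 7) (φ 8) (φ 9)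
    hpos (hmono (by decide)) (hmono (by decide)) (hmono (by decide)) (hmono (by decide))
    (hmono (by decide)) (hmono (by decide)) (hmono (by decide)) (hmono (by decide))
    (hmono (by decide)) hineq
  have hexp : ∀ ψ : Fin 10 → ℤ, ∑ i, ψ i
      = ψ 0 + ψ 1 + ψ 2 + ψ 3 + ψ 4 + ψ 5 + ψ 6 + ψ 7 + ψ 8 + ψ 9 := by
    intro ψ
    open Fin.NatCast in have h := Fin.sum_univ_eq_sum_range (fun k : ℕ => ψ (k : Fin 10)) 10
    open Fin.NatCast in rw [Finset.sum_congr rfl (fun i _ => (Fin.cast_val_eq_self i).symm ▸ rfl :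
      ∀ i ∈ Finset.univ, ψ i = ψ ((i.val : ℕ) : Fin 10)), h]
    simp [Finset.sum_range_succ]
    rfl
  have hsum : ∑ i, φ i = φ 0 + φ 1 + φ 2 + φ 3 + φ 4 + φ 5 + φ 6 + φ 7 + φ 8 + φ 9 :=
    hexp φ
  have hsq : ∑ j, φ j * φ j
      = (φ 0)^2+(φ 1)^2+(φ 2)^2+(φ 3)^2+(φ 4)^2+(φ 5)^2+(φ 6)^2+(φ 7)^2+(φ 8)^2+(φ 9)^2 := by
    rw [hexp (fun j => φ j * φ j)]
    ring
  rw [hsum] at hc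
  rw [hsq]
  have hs2 : (φ 0 + φ 1 + φ 2 + φ 3 + φ 4 + φ 5 + φ 6 + φ 7 + φ 8 + φ 9) ^ 2
      = 9 * (c * c) := by rw [hc]; ring
  linarith [hkey, hs2]
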